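/- If N is a Midy pseudoprime to base b, then N is a Fermat pseudoprime to base b, i.e., b^{N−1} ≡ 1 (mod N). -/

import Mathlib

/-- The multiplicative order of `b` modulo `N`. -/
noncomputable def ord (b N : ℕ) : ℕ := orderOf (b : ZMod N)

/-- `N` is a Midy pseudoprime to base `b`: `N` is odd composite, coprime to `b` and to
`|b|_N`, and `|b|_N = |b|_p` for every prime `p ∣ N` (equivalent characterization). -/
def MidyPsp (b N : ℕ) : Prop :=
  Odd N ∧ 1 < N ∧ ¬ N.Prime ∧ Nat.Coprime N b ∧ Nat.Coprime N (ord b N) ∧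
    ∀ p : ℕ, p.Prime → p ∣ N → ord b N = ord b p

theorem stmt16 (b N : ℕ) (h : MidyPsp b N) : b ^ (N - 1) ≡ 1 [MOD N] := by
  obtain ⟨hodd, hN1, hnp, hcop, hcope, hord⟩ := h
  set e := ord b N with he
  have key : ∀ p, p.Prime → p ∣ N → p ≡ 1 [MOD e] := by
    intro p hp hpN
    have hpb : ¬ p ∣ b := by
      intro hd
      have : p ∣ Nat.gcd N b := Nat.dvd_gcd hpN hd
      rw [hcop] at this
      exact hp.one_lt.ne' (Nat.eq_one_of_dvd_one this)
    haveI : Fact p.Prime := ⟨hp⟩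
    have hb0 : (b : ZMod p) ≠ 0 := by
      simpa [ZMod.natCast_eq_zero_iff] using hpb
    have h1 : (b : ZMod p) ^ (p - 1) = 1 := ZMod.pow_card_sub_one_eq_one hb0
    have h2 : e ∣ p - 1 := by
      rw [hord p hp hpN]
      exact orderOf_dvd_iff_pow_eq_one.mpr h1
    exact ((Nat.modEq_iff_dvd' hp.one_lt.le).mpr h2).symm
  have main : ∀ M, M ∣ N → M ≡ 1 [MOD e] := by
    intro M
    induction M using Nat.strong_induction_on with
    | _ M ih =>
      intro hMN
      rcases eq_or_ne M 1 with rfl | hM1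
      · rfl
      have hM0 : M ≠ 0 := by rintro rfl; rw [zero_dvd_iff] at hMN; omega
      obtain ⟨p, hp, hpM⟩ := Nat.exists_prime_and_dvd hM1
      obtain ⟨M', rfl⟩ := hpM
      have hM'0 : M' ≠ 0 := by rintro rfl; simp at hM0
      have hlt : M' < p * M' := by
        have := hp.one_lt
        calc M' = 1 * M' := (one_mul M').symm
        _ < p * M' := (Nat.mul_lt_mul_right (Nat.pos_of_ne_zero hM'0)).mpr this
      have hM'N : M' ∣ N := dvd_trans ⟨p, mul_comm p M'⟩ hMN
      have h1 := ih M' hlt hM'N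
      have h2 := key p hp (dvd_trans ⟨M', rfl⟩ hMN)
      calc p * M' ≡ 1 * 1 [MOD e] := Nat.ModEq.mul h2 h1
        _ = 1 := one_mul 1
  have hdvd : e ∣ N - 1 := (Nat.modEq_iff_dvd' (by omega)).mp (main N dvd_rfl).symm
  have hpow : (b : ZMod N) ^ (N - 1) = 1 := orderOf_dvd_iff_pow_eq_one.mp hdvd
  rw [← ZMod.natCast_eq_natCast_iff]
  push_cast
  exact hpow
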